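/- Let X be a Banach space, 1 < p < ∞, and let N be the greatest integer strictly less than p. Let φ : X → ℝ be N-times Fréchet differentiable with φ(0) = 0, φ(x) = 2 whenever ‖x‖ ≥ 1, and ‖φ^{(N)}(x) − φ^{(N)}(y)‖ ≤ M ‖x − y‖^{p−N} for all x, y ∈ X, where M > 0. Let {x_n} be a weakly null normalized sequence in X such that P(x_n) → 0 for every continuous homogeneous polynomial P on X of degree at most N. Then there exist a constant C > 0 (depending only on M and p) and a subsequence of {x_n} having an upper p-estimate with constant C. -/

import Mathlib

open Filter Finset

/-- A sequence is normalized if every term has norm one. -/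
def IsNormalizedSeq {X : Type*} [NormedAddCommGroup X] (x : ℕ → X) : Prop :=
  ∀ n, ‖x n‖ = 1

/-- A sequence in a Banach lattice is pairwise disjoint if `|x i| ⊓ |x j| = 0` for `i ≠ j`. -/
def IsDisjointSeq {X : Type*} [NormedAddCommGroup X] [Lattice X] [IsOrderedAddMonoid X] [HasSolidNorm X] (x : ℕ → X) : Prop :=
  ∀ i j, i ≠ j → |x i| ⊓ |x j| = 0

/-- A sequence is weakly null if `f (x n) → 0` for every continuous linear functional `f`. -/
def IsWeaklyNull {X : Type*} [NormedAddCommGroup X] [NormedSpace ℝ X] (x : ℕ → X) : Prop :=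
  ∀ f : X →L[ℝ] ℝ, Tendsto (fun n => f (x n)) atTop (nhds 0)

/-- A sequence has an upper `p`-estimate with constant `C`. -/
def HasUpperEstimate {X : Type*} [NormedAddCommGroup X] [NormedSpace ℝ X]
    (p C : ℝ) (x : ℕ → X) : Prop :=
  ∀ (n : ℕ) (a : ℕ → ℝ),
    ‖∑ k ∈ Finset.range n, a k • x k‖ ≤ C * (∑ k ∈ Finset.range n, |a k| ^ p) ^ (1 / p)

/-- A sequence has a lower `q`-estimate with constant `C`. -/
def HasLowerEstimate {X : Type*} [NormedAddCommGroup X] [NormedSpace ℝ X]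
    (q C : ℝ) (x : ℕ → X) : Prop :=
  ∀ (n : ℕ) (a : ℕ → ℝ),
    C * (∑ k ∈ Finset.range n, |a k| ^ q) ^ (1 / q) ≤ ‖∑ k ∈ Finset.range n, a k • x k‖

/-- A sequence is equivalent to the unit vector basis of `ℓ_r`. -/
def EquivUnitBasisLp {X : Type*} [NormedAddCommGroup X] [NormedSpace ℝ X]
    (r : ℝ) (x : ℕ → X) : Prop :=
  ∃ c C : ℝ, 0 < c ∧ 0 < C ∧ HasLowerEstimate r c x ∧ HasUpperEstimate r C x

/-- `smoothOrder p` is the greatest integer strictly less than `p` (for `p > 1`). -/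
noncomputable def smoothOrder (p : ℝ) : ℕ := ⌈p⌉₊ - 1

/-- `φ : X → ℝ` is `UH^p`-smooth: it is `N`-times Fréchet differentiable, where `N` is the
greatest integer strictly below `p`, and its `N`-th derivative is `(p-N)`-Hölder. -/
def IsUHSmoothFun {X : Type*} [NormedAddCommGroup X] [NormedSpace ℝ X]
    (p : ℝ) (φ : X → ℝ) : Prop :=
  ContDiff ℝ (smoothOrder p) φ ∧
  ∃ M : ℝ, 0 < M ∧ ∀ x y : X,
    ‖iteratedFDeriv ℝ (smoothOrder p) φ x - iteratedFDeriv ℝ (smoothOrder p) φ y‖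
      ≤ M * ‖x - y‖ ^ (p - (smoothOrder p : ℝ))

/-- A Banach space is `UH^p`-smooth if it carries a `UH^p`-smooth bump function. -/
def IsUHSmooth (p : ℝ) (X : Type*) [NormedAddCommGroup X] [NormedSpace ℝ X] : Prop :=
  ∃ φ : X → ℝ, IsUHSmoothFun p φ ∧
    Bornology.IsBounded (Function.support φ) ∧ (Function.support φ).Nonempty

/-- `X` has the `UDS_p`-property: there is a uniform constant `C` such that every normalized
pairwise disjoint sequence has a subsequence with an upper `p`-estimate with constant `C`. -/
def HasUDS (X : Type*) [NormedAddCommGroup X] [Lattice X] [IsOrderedAddMonoid X] [HasSolidNorm X] [NormedSpace ℝ X] (p : ℝ) : Prop :=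
  ∃ C : ℝ, 0 < C ∧ ∀ x : ℕ → X, IsNormalizedSeq x → IsDisjointSeq x →
    ∃ φ : ℕ → ℕ, StrictMono φ ∧ HasUpperEstimate p C (x ∘ φ)

section Aux
variable {X : Type*} [NormedAddCommGroup X] [NormedSpace ℝ X]

lemma iteratedDeriv_line {n : ℕ} {φ : X → ℝ} (hφ : ContDiff ℝ n φ) (y h : X) :
    ∀ j, j ≤ n → ∀ t : ℝ, iteratedDeriv j (fun s : ℝ => φ (y + s • h)) t
      = iteratedFDeriv ℝ j φ (y + t • h) (fun _ => h) := by
  intro j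
  induction j with
  | zero => intro _ t; simp [iteratedDeriv_zero]
  | succ j IH =>
    intro hj t
    have hj' : j ≤ n := le_of_lt (Nat.lt_of_succ_le hj)
    rw [iteratedDeriv_succ]
    have hIH : iteratedDeriv j (fun s : ℝ => φ (y + s • h))
        = fun s : ℝ => iteratedFDeriv ℝ j φ (y + s • h) (fun _ => h) :=
      funext fun s => IH hj' s
    rw [hIH]
    have hc : HasDerivAt (fun s : ℝ => y + s • h) h t := by
      simpa using ((hasDerivAt_id t).smul_const h).const_add y
    have hΨ : DifferentiableAt ℝ (iteratedFDeriv ℝ j φ) (y + t • h) :=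
      (hφ.differentiable_iteratedFDeriv (by exact_mod_cast Nat.lt_of_succ_le hj)).differentiableAt
    have hcomp : HasDerivAt (fun s : ℝ => iteratedFDeriv ℝ j φ (y + s • h))
        (fderiv ℝ (iteratedFDeriv ℝ j φ) (y + t • h) h) t :=
      hΨ.hasFDerivAt.comp_hasDerivAt t hc
    have heval := ((ContinuousMultilinearMap.apply ℝ (fun _ : Fin j => X) ℝ
        (fun _ => h)).hasFDerivAt.comp_hasDerivAt t hcomp)
    have h2 : HasDerivAt (fun s : ℝ => iteratedFDeriv ℝ j φ (y + s • h) (fun _ => h))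
        ((fderiv ℝ (iteratedFDeriv ℝ j φ) (y + t • h)) h (fun _ => h)) t := heval
    rw [h2.deriv, iteratedFDeriv_succ_apply_left]
    rfl
end Aux


lemma taylor_one_dim : ∀ (n : ℕ) (g : ℝ → ℝ) (K : ℝ), ContDiff ℝ n g → 0 ≤ K →
    (∀ t ∈ Set.Icc (0:ℝ) 1, |iteratedDeriv n g t - iteratedDeriv n g 0| ≤ K) →
    ∀ t ∈ Set.Icc (0:ℝ) 1,
      |g t - ∑ j ∈ range (n+1), iteratedDeriv j g 0 * t ^ j / (Nat.factorial j)| ≤ K := by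
  intro n
  induction n with
  | zero =>
    intro g K _ _ hb t ht
    simpa using hb t ht
  | succ n IH =>
    intro g K hg hK hb t ht
    have hgd : Differentiable ℝ g := hg.differentiable (by simp)
    have hg' : ContDiff ℝ n (deriv g) := by
      have h : ContDiff ℝ ((n : ℕ∞) + 1) g := by exact_mod_cast hg
      exact_mod_cast (contDiff_succ_iff_deriv.mp h).2.2
    have hb' : ∀ s ∈ Set.Icc (0:ℝ) 1, |iteratedDeriv n (deriv g) s - iteratedDeriv n (deriv g) 0| ≤ K := by
      intro s hs
      have := hb s hs
      rwa [iteratedDeriv_succ'] at this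
    have IH' := IH (deriv g) K hg' hK hb'
    -- F and its derivative
    set F : ℝ → ℝ := fun s => g s - ∑ j ∈ range (n+2), iteratedDeriv j g 0 * s ^ j / (Nat.factorial j)
    have hF0 : F 0 = 0 := by
      simp only [F]
      rw [Finset.sum_eq_single 0]
      · simp
      · intro j _ hj
        rcases Nat.exists_eq_succ_of_ne_zero hj with ⟨i, rfl⟩
        simp [zero_pow]
      · simp
    have hFd : ∀ s : ℝ, HasDerivAt F
        (deriv g s - ∑ j ∈ range (n+1), iteratedDeriv (j+1) g 0 * s ^ j / (Nat.factorial j)) s := by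
      intro s
      have hpoly : HasDerivAt (fun u : ℝ => ∑ j ∈ range (n+2), iteratedDeriv j g 0 * u ^ j / (Nat.factorial j))
          (∑ j ∈ range (n+2), iteratedDeriv j g 0 * ((j:ℝ) * s ^ (j-1)) / (Nat.factorial j)) s := by
        apply HasDerivAt.fun_sum
        intro j _
        simpa [mul_div_assoc] using ((hasDerivAt_pow j s).const_mul (iteratedDeriv j g 0)).div_const ((Nat.factorial j) : ℝ)
      have hre : (∑ j ∈ range (n+2), iteratedDeriv j g 0 * ((j:ℝ) * s ^ (j-1)) / (Nat.factorial j))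
          = ∑ j ∈ range (n+1), iteratedDeriv (j+1) g 0 * s ^ j / (Nat.factorial j) := by
        rw [Finset.sum_range_succ']
        simp only [Nat.cast_zero, zero_mul, mul_zero, Nat.factorial_zero, Nat.cast_one, zero_div, add_zero]
        apply Finset.sum_congr rfl
        intro j _
        have : ((Nat.factorial (j+1)) : ℝ) = (j+1) * ((Nat.factorial j) : ℝ) := by
          rw [Nat.factorial_succ]; push_cast; ring
        rw [this]
        have hj1 : ((j:ℝ)+1) ≠ 0 := by positivity
        have hjf : (((Nat.factorial j) : ℝ)) ≠ 0 := by positivity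
        field_simp
        rw [Nat.add_sub_cancel]; push_cast; ring
      rw [← hre]
      exact ((hgd s).hasDerivAt).sub hpoly
    have hbound : ∀ s ∈ Set.Icc (0:ℝ) 1,
        ‖deriv g s - ∑ j ∈ range (n+1), iteratedDeriv (j+1) g 0 * s ^ j / (Nat.factorial j)‖ ≤ K := by
      intro s hs
      have := IH' s hs
      simp only [Real.norm_eq_abs]
      have heq : ∀ j, iteratedDeriv j (deriv g) 0 = iteratedDeriv (j+1) g 0 := by
        intro j; rw [iteratedDeriv_succ']
      calc |deriv g s - ∑ j ∈ range (n+1), iteratedDeriv (j+1) g 0 * s ^ j / (Nat.factorial j)|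
          = |deriv g s - ∑ j ∈ range (n+1), iteratedDeriv j (deriv g) 0 * s ^ j / (Nat.factorial j)| := by
            congr 2; exact Finset.sum_congr rfl fun j _ => by rw [heq]
        _ ≤ K := this
    have := Convex.norm_image_sub_le_of_norm_hasDerivWithin_le
      (fun s hs => (hFd s).hasDerivWithinAt) hbound (convex_Icc 0 1) (Set.left_mem_Icc.2 (by norm_num)) ht
    rw [hF0, sub_zero, Real.norm_eq_abs] at this
    calc |g t - ∑ j ∈ range (n+1+1), iteratedDeriv j g 0 * t ^ j / (Nat.factorial j)| = |F t| := rfl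
      _ ≤ K * ‖t - 0‖ := this
      _ ≤ K * 1 := by
          apply mul_le_mul_of_nonneg_left _ hK
          rw [sub_zero, Real.norm_eq_abs, abs_of_nonneg ht.1]; exact ht.2
      _ = K := mul_one K

section Aux3
variable {X : Type*} [NormedAddCommGroup X] [NormedSpace ℝ X]

lemma taylor_banach {N : ℕ} {φ : X → ℝ} (hφ : ContDiff ℝ N φ) {M q : ℝ} (hM : 0 ≤ M)
    (hq : 0 ≤ q)
    (hhold : ∀ u v : X, ‖iteratedFDeriv ℝ N φ u - iteratedFDeriv ℝ N φ v‖ ≤ M * ‖u - v‖ ^ q)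
    (y h : X) :
    |φ (y + h) - ∑ j ∈ range (N+1), iteratedFDeriv ℝ j φ y (fun _ => h) / (Nat.factorial j)|
      ≤ M * ‖h‖ ^ q * ‖h‖ ^ N := by
  set g : ℝ → ℝ := fun s => φ (y + s • h) with hgdef
  have hline : ContDiff ℝ (N : ℕ) (fun s : ℝ => y + s • h) :=
    contDiff_const.add (contDiff_id.smul contDiff_const)
  have hg : ContDiff ℝ (N : ℕ) g := hφ.comp hline
  set K : ℝ := M * ‖h‖ ^ q * ‖h‖ ^ N with hKdef
  have hK : 0 ≤ K := by positivity
  have hb : ∀ t ∈ Set.Icc (0:ℝ) 1, |iteratedDeriv N g t - iteratedDeriv N g 0| ≤ K := by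
    intro t ht
    rw [iteratedDeriv_line hφ y h N le_rfl t, iteratedDeriv_line hφ y h N le_rfl 0]
    rw [zero_smul, add_zero]
    set A := iteratedFDeriv ℝ N φ (y + t • h)
    set B := iteratedFDeriv ℝ N φ y
    have h1 : A (fun _ => h) - B (fun _ => h) = (A - B) (fun _ => h) := by
      rw [ContinuousMultilinearMap.sub_apply]
    rw [h1]
    calc |(A - B) (fun _ => h)| ≤ ‖A - B‖ * ∏ _i : Fin N, ‖h‖ :=
          (A - B).le_opNorm _
      _ = ‖A - B‖ * ‖h‖ ^ N := by rw [Finset.prod_const, Finset.card_univ, Fintype.card_fin]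
      _ ≤ (M * ‖(y + t • h) - y‖ ^ q) * ‖h‖ ^ N := by
          apply mul_le_mul_of_nonneg_right (hhold _ _) (by positivity)
      _ ≤ K := by
          rw [hKdef]
          apply mul_le_mul_of_nonneg_right _ (by positivity)
          apply mul_le_mul_of_nonneg_left _ hM
          have : ‖(y + t • h) - y‖ = t * ‖h‖ := by
            rw [add_sub_cancel_left, norm_smul, Real.norm_eq_abs, abs_of_nonneg ht.1]
          rw [this]
          apply Real.rpow_le_rpow (mul_nonneg ht.1 (norm_nonneg h)) _ hq
          nlinarith [norm_nonneg h, ht.1, ht.2]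
  have := taylor_one_dim N g K hg hK hb 1 (Set.right_mem_Icc.2 (by norm_num))
  have hg1 : g 1 = φ (y + h) := by rw [hgdef]; simp
  have hsum : ∀ j ∈ range (N+1), iteratedDeriv j g 0 * (1:ℝ) ^ j / (Nat.factorial j)
      = iteratedFDeriv ℝ j φ y (fun _ => h) / (Nat.factorial j) := by
    intro j hj
    rw [iteratedDeriv_line hφ y h j (Nat.lt_succ_iff.mp (Finset.mem_range.mp hj)) 0]
    rw [zero_smul, add_zero, one_pow, mul_one]
  rw [hg1, Finset.sum_congr rfl hsum] at this
  exact this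
end Aux3

section Aux4
variable {X : Type*} [NormedAddCommGroup X] [NormedSpace ℝ X]

lemma eventually_small_on_compact {N : ℕ} {φ : X → ℝ} (hφ : ContDiff ℝ N φ)
    {x : ℕ → X} (hn : ∀ n, ‖x n‖ = 1)
    (hPnull : ∀ j : ℕ, 1 ≤ j → j ≤ N →
      ∀ A : ContinuousMultilinearMap ℝ (fun _ : Fin j => X) ℝ,
        Tendsto (fun n => A (fun _ => x n)) atTop (nhds 0))
    {K : Set X} (hK : IsCompact K) {η : ℝ} (hη : 0 < η) {j : ℕ} (hj1 : 1 ≤ j) (hjN : j ≤ N) :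
    ∀ᶠ m in atTop, ∀ y ∈ K, |iteratedFDeriv ℝ j φ y (fun _ => x m)| ≤ η := by
  set Φ := iteratedFDeriv ℝ j φ with hΦdef
  have hΦc : Continuous Φ := hφ.continuous_iteratedFDeriv (by exact_mod_cast hjN)
  -- cover K
  have hU : ∀ z ∈ K, {w : X | ‖Φ w - Φ z‖ < η/2} ∈ nhds z := by
    intro z _
    have : Continuous fun w => ‖Φ w - Φ z‖ := (hΦc.sub continuous_const).norm
    have hopen : IsOpen {w : X | ‖Φ w - Φ z‖ < η/2} := isOpen_lt this continuous_const
    exact hopen.mem_nhds (by simp [sub_self]; positivity)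
  obtain ⟨t, htK, hcov⟩ := hK.elim_nhds_subcover (fun z => {w : X | ‖Φ w - Φ z‖ < η/2}) hU
  have hev : ∀ᶠ m in atTop, ∀ z ∈ t, |Φ z (fun _ => x m)| < η/2 := by
    rw [Finset.eventually_all]
    intro z _
    have := hPnull j hj1 hjN (Φ z)
    have h2 : Set.Iio (η/2) ∩ Set.Ioi (-(η/2)) ∈ nhds (0:ℝ) := by
      apply Filter.inter_mem
      · exact Iio_mem_nhds (by positivity)
      · exact Ioi_mem_nhds (by simp; positivity)
    filter_upwards [this.eventually_mem h2] with m hm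
    rw [abs_lt]; exact ⟨hm.2, hm.1⟩
  filter_upwards [hev] with m hm y hy
  obtain ⟨z, hz, hyz⟩ := Set.mem_iUnion₂.mp (hcov hy)
  have hyz' : ‖Φ y - Φ z‖ < η/2 := hyz
  have hprod : (∏ _i : Fin j, ‖x m‖) = 1 := by
    simp [hn m]
  calc |Φ y (fun _ => x m)|
      ≤ |Φ y (fun _ => x m) - Φ z (fun _ => x m)| + |Φ z (fun _ => x m)| := by
        have := abs_sub_le (Φ y (fun _ => x m)) (Φ z (fun _ => x m)) 0
        simpa using this
    _ ≤ ‖Φ y - Φ z‖ * (∏ _i : Fin j, ‖x m‖) + η/2 := by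
        apply add_le_add _ (le_of_lt (hm z hz))
        have : Φ y (fun _ => x m) - Φ z (fun _ => x m) = (Φ y - Φ z) (fun _ => x m) := by
          rw [ContinuousMultilinearMap.sub_apply]
        rw [this]
        exact (Φ y - Φ z).le_opNorm _
    _ ≤ η/2 * 1 + η/2 := by
        rw [hprod]; exact add_le_add (mul_le_mul_of_nonneg_right (le_of_lt hyz') (by norm_num : (0:ℝ) ≤ 1)) le_rfl
    _ = η := by ring
end Aux4

section Aux5
variable {X : Type*} [NormedAddCommGroup X] [NormedSpace ℝ X]

lemma exists_next {N : ℕ} {φ : X → ℝ} (hφ : ContDiff ℝ N φ) {x : ℕ → X} (hn : ∀ n, ‖x n‖ = 1)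
    (hPnull : ∀ j : ℕ, 1 ≤ j → j ≤ N →
      ∀ A : ContinuousMultilinearMap ℝ (fun _ : Fin j => X) ℝ,
        Tendsto (fun n => A (fun _ => x n)) atTop (nhds 0))
    (k b : ℕ) (u : ℕ → X) (η : ℝ) :
    ∃ m, b < m ∧ (0 < η → ∀ c : ℕ → ℝ, (∀ i, i < k → |c i| ≤ 1) →
      ∀ j, 1 ≤ j → j ≤ N →
        |iteratedFDeriv ℝ j φ (∑ i ∈ range k, c i • u i) (fun _ => x m)| ≤ η) := by
  by_cases hη : 0 < η
  · set K : Set X := (fun c : Fin k → ℝ => ∑ i, c i • u (i:ℕ)) ''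
      (Set.univ.pi fun _ => Set.Icc (-1:ℝ) 1) with hKdef
    have hKc : IsCompact K :=
      (isCompact_univ_pi fun _ => isCompact_Icc).image
        (continuous_finset_sum _ fun i _ => (continuous_apply i).smul continuous_const)
    have hev : ∀ᶠ m in atTop, ∀ j ∈ Finset.Icc 1 N, ∀ y ∈ K,
        |iteratedFDeriv ℝ j φ y (fun _ => x m)| ≤ η := by
      rw [Finset.eventually_all]
      intro j hj
      obtain ⟨hj1, hjN⟩ := Finset.mem_Icc.mp hj
      exact eventually_small_on_compact hφ hn hPnull hKc hη hj1 hjN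
    obtain ⟨m, hm1, hm2⟩ := ((eventually_gt_atTop b).and hev).exists
    refine ⟨m, hm1, fun _ c hc j hj1 hjN => ?_⟩
    have hy : (∑ i ∈ range k, c i • u i) ∈ K := by
      refine ⟨fun i : Fin k => c i, fun i _ => ?_, ?_⟩
      · have := hc i i.isLt
        rw [Set.mem_Icc]; exact abs_le.mp this
      · simp only []; rw [← Finset.sum_range (fun i => c i • u i)]
    exact hm2 j (Finset.mem_Icc.mpr ⟨hj1, hjN⟩) _ hy
  · exact ⟨b+1, Nat.lt_succ_self b, fun h => absurd h hη⟩
end Aux5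

/-- Second case of the proof of Theorem 2: if `φ` is `UH^p`-smooth with `φ(0)=0`, `φ = 2`
outside the unit ball, and `{x_n}` is a weakly null normalized sequence which is
`𝒫_N`-null (all continuous homogeneous polynomials of degree between `1` and `N` vanish in the
limit), then some subsequence of `{x_n}` has an upper `p`-estimate with a constant depending
only on `M` and `p`. -/
theorem statement12 {X : Type*} [NormedAddCommGroup X] [NormedSpace ℝ X] [CompleteSpace X]
    (p : ℝ) (hp : 1 < p) (M : ℝ) (hM : 0 < M) (φ : X → ℝ)
    (hdiff : ContDiff ℝ (smoothOrder p) φ)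
    (h0 : φ 0 = 0) (h2 : ∀ x : X, 1 ≤ ‖x‖ → φ x = 2)
    (hhold : ∀ x y : X,
      ‖iteratedFDeriv ℝ (smoothOrder p) φ x - iteratedFDeriv ℝ (smoothOrder p) φ y‖
        ≤ M * ‖x - y‖ ^ (p - (smoothOrder p : ℝ)))
    (x : ℕ → X) (hwn : IsWeaklyNull x) (hn : IsNormalizedSeq x)
    (hPnull : ∀ m : ℕ, 1 ≤ m → m ≤ smoothOrder p →
      ∀ A : ContinuousMultilinearMap ℝ (fun _ : Fin m => X) ℝ,
        Tendsto (fun n => A (fun _ => x n)) atTop (nhds 0)) :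
    ∃ C : ℝ, 0 < C ∧ ∃ ψ : ℕ → ℕ, StrictMono ψ ∧ HasUpperEstimate p C (x ∘ ψ) := by
  have hp0 : (0:ℝ) < p := lt_trans zero_lt_one hp
  set N : ℕ := smoothOrder p with hNdef
  have hceil : 1 < ⌈p⌉₊ := Nat.lt_ceil.mpr (by exact_mod_cast hp)
  have hN1 : 1 ≤ N := by
    rw [hNdef, smoothOrder]; omega
  have hNcast : (N:ℝ) = (⌈p⌉₊:ℝ) - 1 := by
    rw [hNdef, smoothOrder, Nat.cast_sub (le_of_lt hceil)]; norm_num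
  have hNltp : (N:ℝ) < p := by
    have := Nat.ceil_lt_add_one (le_of_lt hp0)
    rw [hNcast]; linarith
  have hq0 : 0 ≤ p - (N:ℝ) := le_of_lt (by linarith)
  -- Taylor bound
  have tb : ∀ (y : X) (a : ℝ) (m : ℕ),
      |φ (y + a • x m) - ∑ j ∈ range (N+1),
        iteratedFDeriv ℝ j φ y (fun _ => a • x m) / (Nat.factorial j)| ≤ M * |a| ^ p := by
    intro y a m
    have := taylor_banach hdiff (le_of_lt hM) hq0 hhold y (a • x m)
    have hno : ‖a • x m‖ = |a| := by rw [norm_smul, hn m, Real.norm_eq_abs, mul_one]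
    rw [hno] at this
    refine this.trans (le_of_eq ?_)
    rw [mul_assoc]
    congr 1
    rw [← Real.rpow_natCast |a| N, ← Real.rpow_add' (abs_nonneg a) (by rw [sub_add_cancel]; exact ne_of_gt hp0), sub_add_cancel]
  -- choice function
  have E := fun (k b : ℕ) (u : ℕ → X) (η : ℝ) => exists_next hdiff hn hPnull k b u η
  choose F hF1 hF2 using E
  set η : ℕ → ℝ := fun k => (2:ℝ)⁻¹^(k+2) / N with hηdef
  have hNR : (0:ℝ) < N := by exact_mod_cast Nat.lt_of_lt_of_le Nat.zero_lt_one hN1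
  have ηpos : ∀ k, 0 < η k := fun k => by rw [hηdef]; positivity
  -- the recursive subsequence
  set G : ℕ → (ℕ → ℕ) := fun k => Nat.rec (motive := fun _ => ℕ → ℕ)
    (fun _ => F 0 0 (fun _ => 0) (η 0))
    (fun k ih i => if i ≤ k then ih i else F (k+1) (ih k) (fun i' => x (ih i')) (η (k+1))) k
    with hGdef
  set ψ : ℕ → ℕ := fun k => G k k with hψdef
  have gsucc : ∀ k, G (k+1) = fun i =>
      if i ≤ k then G k i else F (k+1) (G k k) (fun i' => x (G k i')) (η (k+1)) := fun k => rfl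
  have hψsucc : ∀ k, ψ (k+1) = F (k+1) (ψ k) (fun i' => x (G k i')) (η (k+1)) := by
    intro k
    show G (k+1) (k+1) = _
    rw [gsucc]
    simp [Nat.not_succ_le_self]
    rfl
  have hGψ : ∀ k i, i ≤ k → G k i = ψ i := by
    intro k
    induction k with
    | zero => intro i hi; interval_cases i; rfl
    | succ k IH =>
      intro i hi
      by_cases h : i ≤ k
      · rw [gsucc]; simp only [if_pos h]; exact IH i h
      · have hik : i = k + 1 := by omega
        subst hik; rfl
  have hmono : StrictMono ψ := by
    apply strictMono_nat_of_lt_succ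
    intro k
    rw [hψsucc k]
    exact hF1 (k+1) (ψ k) _ _
  have hkey : ∀ (k : ℕ) (c : ℕ → ℝ), (∀ i, |c i| ≤ 1) → ∀ j, 1 ≤ j → j ≤ N →
      |iteratedFDeriv ℝ j φ (∑ i ∈ range k, c i • x (ψ i)) (fun _ => x (ψ k))| ≤ η k := by
    intro k c hc j hj1 hjN
    cases k with
    | zero =>
      have := hF2 0 0 (fun _ => (0:X)) (η 0) (ηpos 0) c (fun i _ => hc i) j hj1 hjN
      simp at this; exact this
    | succ k =>
      have := hF2 (k+1) (ψ k) (fun i' => x (G k i')) (η (k+1)) (ηpos _) c (fun i _ => hc i) j hj1 hjN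
      rw [hψsucc k]
      have hsum : ∑ i ∈ range (k+1), c i • x (G k i) = ∑ i ∈ range (k+1), c i • x (ψ i) :=
        Finset.sum_congr rfl fun i hi => by
          rw [hGψ k i (Nat.lt_succ_iff.mp (Finset.mem_range.mp hi))]
      rw [hsum] at this
      exact this
  -- main inductive estimate
  have hmain : ∀ (a : ℕ → ℝ), (∀ i, |a i| ≤ 1) → ∀ n,
      φ (∑ k ∈ range n, a k • x (ψ k)) ≤ M * (∑ k ∈ range n, |a k| ^ p)
        + ∑ k ∈ range n, (2:ℝ)⁻¹^(k+2) := by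
    intro a ha n
    induction n with
    | zero => simpa using le_of_eq h0
    | succ n IHn =>
      simp only [Finset.sum_range_succ]
      set S := ∑ k ∈ range n, a k • x (ψ k) with hSdef
      have htay := tb S (a n) (ψ n)
      have hterm : ∀ j ∈ range N,
          |iteratedFDeriv ℝ (j+1) φ S (fun _ => a n • x (ψ n)) / (Nat.factorial (j+1))|
            ≤ (2:ℝ)⁻¹^(n+2) / N := by
        intro j hj
        have hjN : j + 1 ≤ N := Nat.succ_le_of_lt (Finset.mem_range.mp hj)
        have hsmul : iteratedFDeriv ℝ (j+1) φ S (fun _ => a n • x (ψ n))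
            = (a n)^(j+1) * iteratedFDeriv ℝ (j+1) φ S (fun _ => x (ψ n)) := by
          have h := (iteratedFDeriv ℝ (j+1) φ S).map_smul_univ (fun _ => a n) (fun _ => x (ψ n))
          simp only [Finset.prod_const, Finset.card_univ, Fintype.card_fin, smul_eq_mul] at h
          rw [← h]
        rw [hsmul]
        have hD := hkey n a ha (j+1) (Nat.succ_le_succ (Nat.zero_le j)) hjN
        have hfact : (1:ℝ) ≤ |(Nat.factorial (j+1) : ℝ)| := by
          rw [abs_of_pos (by positivity)]
          exact_mod_cast Nat.one_le_iff_ne_zero.mpr (Nat.factorial_ne_zero (j+1))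
        have h1 : |a n|^(j+1) ≤ 1 := pow_le_one₀ (abs_nonneg _) (ha n)
        calc |(a n)^(j+1) * iteratedFDeriv ℝ (j+1) φ S (fun _ => x (ψ n)) / (Nat.factorial (j+1))|
            = |a n|^(j+1) * |iteratedFDeriv ℝ (j+1) φ S (fun _ => x (ψ n))| / |(Nat.factorial (j+1) : ℝ)| := by
              rw [abs_div, abs_mul, abs_pow]
          _ ≤ |a n|^(j+1) * |iteratedFDeriv ℝ (j+1) φ S (fun _ => x (ψ n))| := by
              apply div_le_self (by positivity) hfact
          _ ≤ 1 * η n := mul_le_mul h1 hD (abs_nonneg _) zero_le_one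
          _ = (2:ℝ)⁻¹^(n+2) / N := by rw [one_mul]
      have hsplit : ∑ j ∈ range (N+1),
            iteratedFDeriv ℝ j φ S (fun _ => a n • x (ψ n)) / (Nat.factorial j)
          = (∑ j ∈ range N,
              iteratedFDeriv ℝ (j+1) φ S (fun _ => a n • x (ψ n)) / (Nat.factorial (j+1))) + φ S := by
        rw [Finset.sum_range_succ']
        congr 1
        simp
      have hsum_bound : |∑ j ∈ range N,
          iteratedFDeriv ℝ (j+1) φ S (fun _ => a n • x (ψ n)) / (Nat.factorial (j+1))|
          ≤ (2:ℝ)⁻¹^(n+2) := by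
        calc |∑ j ∈ range N,
            iteratedFDeriv ℝ (j+1) φ S (fun _ => a n • x (ψ n)) / (Nat.factorial (j+1))|
            ≤ ∑ j ∈ range N,
              |iteratedFDeriv ℝ (j+1) φ S (fun _ => a n • x (ψ n)) / (Nat.factorial (j+1))| :=
              Finset.abs_sum_le_sum_abs _ _
          _ ≤ ∑ _j ∈ range N, (2:ℝ)⁻¹^(n+2) / N := Finset.sum_le_sum hterm
          _ = (N:ℝ) * ((2:ℝ)⁻¹^(n+2) / N) := by
              rw [Finset.sum_const, Finset.card_range, nsmul_eq_mul]
          _ = (2:ℝ)⁻¹^(n+2) := by field_simp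
      rw [hsplit] at htay
      have e1 := (abs_le.mp htay).2
      have e2 := (abs_le.mp hsum_bound).2
      have hap : 0 ≤ |a n| ^ p := Real.rpow_nonneg (abs_nonneg _) p
      nlinarith [IHn, e1, e2, hap, hM]
  -- geometric bound
  have geo : ∀ n : ℕ, ∑ k ∈ range n, (2:ℝ)⁻¹^(k+2) ≤ 1/2 := by
    intro n
    have h1 : ∑ k ∈ range n, (2:ℝ)⁻¹^(k+2) = (2:ℝ)⁻¹^2 * ∑ k ∈ range n, (2:ℝ)⁻¹^k := by
      rw [Finset.mul_sum]
      exact Finset.sum_congr rfl fun k _ => by ring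
    have h2 : ∑ k ∈ range n, (2:ℝ)⁻¹^k ≤ 2 := by
      rw [geom_sum_eq (by norm_num : (2:ℝ)⁻¹ ≠ 1) n]
      have hpow : (0:ℝ) ≤ (2:ℝ)⁻¹^n := by positivity
      have : ((2:ℝ)⁻¹^n - 1)/((2:ℝ)⁻¹ - 1) = 2*(1 - (2:ℝ)⁻¹^n) := by ring
      rw [this]; nlinarith
    rw [h1]; nlinarith
  -- the ball estimate
  have hball : ∀ (a : ℕ → ℝ), (∀ i, |a i| ≤ 1) → ∀ n : ℕ,
      (∑ k ∈ range n, |a k| ^ p) ≤ (2*M)⁻¹ → ‖∑ k ∈ range n, a k • x (ψ k)‖ < 1 := by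
    intro a ha n hsum
    have h1 : φ (∑ k ∈ range n, a k • x (ψ k)) ≤ 1 := by
      have hm := hmain a ha n
      have hM2 : M * (∑ k ∈ range n, |a k|^p) ≤ M * (2*M)⁻¹ :=
        mul_le_mul_of_nonneg_left hsum (le_of_lt hM)
      have hMM : M * (2*M)⁻¹ = 1/2 := by field_simp
      linarith [geo n]
    by_contra hge
    push_neg at hge
    have := h2 _ hge
    rw [this] at h1
    linarith
  -- conclusion
  set δ : ℝ := min 1 ((2*M)⁻¹ ^ (1/p)) with hδdef
  have hδpos : 0 < δ := by
    apply lt_min zero_lt_one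
    apply Real.rpow_pos_of_pos
    positivity
  have hδ1 : δ ≤ 1 := min_le_left _ _
  have hδp : δ ^ p ≤ (2*M)⁻¹ := by
    calc δ ^ p ≤ ((2*M)⁻¹ ^ (1/p)) ^ p :=
          Real.rpow_le_rpow (le_of_lt hδpos) (min_le_right _ _) (le_of_lt hp0)
      _ = (2*M)⁻¹ := by
          rw [← Real.rpow_mul (by positivity), one_div, inv_mul_cancel₀ (ne_of_gt hp0),
            Real.rpow_one]
  refine ⟨δ⁻¹, by positivity, ψ, hmono, ?_⟩
  intro n a
  simp only [Function.comp_apply]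
  set S : ℝ := ∑ k ∈ range n, |a k| ^ p with hSdef
  have hS0 : 0 ≤ S := Finset.sum_nonneg fun k _ => Real.rpow_nonneg (abs_nonneg _) p
  rcases eq_or_lt_of_le hS0 with hS | hS
  · -- all coefficients vanish
    have hz : ∀ k ∈ range n, a k = 0 := by
      intro k hk
      have := (Finset.sum_eq_zero_iff_of_nonneg
        (fun k _ => Real.rpow_nonneg (abs_nonneg _) p)).mp hS.symm k hk
      have := (Real.rpow_eq_zero (abs_nonneg _) (ne_of_gt hp0)).mp this
      exact abs_eq_zero.mp this
    have hzero : ∑ k ∈ range n, a k • x (ψ k) = 0 :=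
      Finset.sum_eq_zero fun k hk => by rw [hz k hk, zero_smul]
    rw [hzero, norm_zero, ← hS, Real.zero_rpow (one_div_ne_zero (ne_of_gt hp0)), mul_zero]
  · set T : ℝ := S ^ (1/p) with hTdef
    have hT : 0 < T := Real.rpow_pos_of_pos hS _
    have hTp : T ^ p = S := by
      rw [hTdef, ← Real.rpow_mul hS0, one_div, inv_mul_cancel₀ (ne_of_gt hp0), Real.rpow_one]
    set b : ℕ → ℝ := fun k => if k < n then (δ/T) * a k else 0 with hbdef
    have hdT : 0 < δ/T := div_pos hδpos hT
    have hb1 : ∀ i, |b i| ≤ 1 := by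
      intro i
      rw [hbdef]
      by_cases hi : i < n
      · simp only [if_pos hi]
        have hai : |a i| ≤ T := by
          by_contra hlt
          push_neg at hlt
          have h1 : T ^ p < |a i| ^ p := Real.rpow_lt_rpow (le_of_lt hT) hlt hp0
          have h2 : |a i| ^ p ≤ S := Finset.single_le_sum
            (fun k (_ : k ∈ range n) => Real.rpow_nonneg (abs_nonneg (a k)) p)
            (Finset.mem_range.mpr hi)
          rw [hTp] at h1
          linarith
        rw [abs_mul, abs_of_pos hdT]
        calc δ/T * |a i| ≤ δ/T * T := mul_le_mul_of_nonneg_left hai (le_of_lt hdT)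
          _ = δ := by field_simp
          _ ≤ 1 := hδ1
      · simp [if_neg hi]
    have hbsum : ∑ k ∈ range n, |b k| ^ p ≤ (2*M)⁻¹ := by
      have heach : ∀ k ∈ range n, |b k| ^ p = (δ/T)^p * |a k| ^ p := by
        intro k hk
        rw [hbdef]
        simp only [if_pos (Finset.mem_range.mp hk)]
        rw [abs_mul, abs_of_pos hdT, Real.mul_rpow (le_of_lt hdT) (abs_nonneg _)]
      rw [Finset.sum_congr rfl heach, ← Finset.mul_sum, ← hSdef]
      have hdiv : (δ/T)^p = δ^p / T^p := Real.div_rpow (le_of_lt hδpos) (le_of_lt hT) p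
      rw [hdiv, hTp]
      calc δ^p / S * S = δ^p := by field_simp
        _ ≤ (2*M)⁻¹ := hδp
    have hlt := hball b hb1 n hbsum
    have hbx : ∑ k ∈ range n, b k • x (ψ k) = (δ/T) • ∑ k ∈ range n, a k • x (ψ k) := by
      rw [Finset.smul_sum]
      apply Finset.sum_congr rfl
      intro k hk
      rw [hbdef]
      simp only [if_pos (Finset.mem_range.mp hk)]
      rw [smul_smul]
    rw [hbx, norm_smul, Real.norm_eq_abs, abs_of_pos hdT] at hlt
    have hV : ‖∑ k ∈ range n, a k • x (ψ k)‖ < T/δ := by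
      rw [lt_div_iff₀ hδpos]
      have h3 := mul_lt_mul_of_pos_left hlt hT
      have h4 : T * (δ/T * ‖∑ k ∈ range n, a k • x (ψ k)‖)
          = ‖∑ k ∈ range n, a k • x (ψ k)‖ * δ := by
        field_simp
      rw [h4, mul_one] at h3
      exact h3
    calc ‖∑ k ∈ range n, a k • x (ψ k)‖ ≤ T/δ := le_of_lt hV
      _ = δ⁻¹ * T := by rw [div_eq_mul_inv, mul_comm]
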